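/- arXiv:2504.00508 — 2 statements merged into one kernel-verified Lean document; each statement's English description precedes it below -/
import Mathlib

section
/- In the multislice Erdős–Rényi model, the sum of covariances between 3D triangle indicators and 1D triangle indicators satisfies R_{3,1} ≤ 3·C(n,3)·(n−2)·∑_{(i,j,k)} p_i^3·p_j·p_k·q^3, where the sum is over ordered triples of pairwise distinct layers; in particular R_{3,1} ≤ (1/2)·n^4·∑_{(i,j,k)} p_i^3·p_j·p_k·q^3. -/
open MeasureTheory Finset ProbabilityTheory

noncomputable def bern (p : ℝ) : Measure Bool :=
  ENNReal.ofReal p • Measure.dirac true + ENNReal.ofReal (1 - p) • Measure.dirac false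

instance (p : ℝ) : IsFiniteMeasure (bern p) := by
  constructor
  simp only [bern, Measure.add_apply, Measure.smul_apply, smul_eq_mul]
  finiteness

abbrev IntraIdx (n L : ℕ) := Fin L × Fin n × Fin n
abbrev InterIdx (n L : ℕ) := Fin n × Fin L × Fin L
abbrev EdgeIdx (n L : ℕ) := IntraIdx n L ⊕ InterIdx n L
abbrev Config (n L : ℕ) := EdgeIdx n L → Bool

/-- Bernoulli measure of each potential edge: intra-layer edges in layer `i` have
probability `p i`, inter-layer (down) edges have probability `q`. -/
noncomputable def edgeBern {n L : ℕ} (p : Fin L → ℝ) (q : ℝ) : EdgeIdx n L → Measure Bool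
  | .inl x => bern (p x.1)
  | .inr _ => bern q

instance {n L : ℕ} (p : Fin L → ℝ) (q : ℝ) (e : EdgeIdx n L) :
    IsFiniteMeasure (edgeBern p q e) := by
  cases e <;> simp only [edgeBern] <;> infer_instance

/-- The multislice Erdős–Rényi (MSER) measure: all potential edge indicators are
independent, intra-layer edges in layer `i` present with probability `p i`,
inter-layer edges with probability `q`. -/
noncomputable def mser (n L : ℕ) (p : Fin L → ℝ) (q : ℝ) : Measure (Config n L) :=
  Measure.pi (edgeBern p q)

/-- canonical intra-layer edge coordinate -/
def ip {n L : ℕ} (i : Fin L) (u v : Fin n) : IntraIdx n L :=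
  if u ≤ v then (i, u, v) else (i, v, u)

/-- canonical inter-layer (down) edge coordinate -/
def dp {n L : ℕ} (u : Fin n) (i j : Fin L) : InterIdx n L :=
  if i ≤ j then (u, i, j) else (u, j, i)

def edgeVal {n L : ℕ} (ω : Config n L) (i : Fin L) (u v : Fin n) : Bool := ω (.inl (ip i u v))
def downVal {n L : ℕ} (ω : Config n L) (u : Fin n) (i j : Fin L) : Bool := ω (.inr (dp u i j))

/-- presence of a 1D triangle on nodes `a,b,c` in layer `i` -/
def tri1 {n L : ℕ} (ω : Config n L) (i : Fin L) (a b c : Fin n) : Bool :=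
  edgeVal ω i a b && edgeVal ω i a c && edgeVal ω i b c

/-- presence of a 2D triangle: single edge `a-b` in layer `i`, edges `b-c`, `c-a` in
layer `j`, down edges at `a` and `b` between layers `i` and `j` -/
def tri2 {n L : ℕ} (ω : Config n L) (i j : Fin L) (a b c : Fin n) : Bool :=
  edgeVal ω i a b && edgeVal ω j b c && edgeVal ω j c a && downVal ω a i j && downVal ω b i j

/-- presence of a 3D triangle: edge `a-b` in layer `i`, `b-c` in layer `j`, `c-a` in
layer `k`, with the three connecting down edges -/
def tri3 {n L : ℕ} (ω : Config n L) (i j k : Fin L) (a b c : Fin n) : Bool :=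
  edgeVal ω i a b && edgeVal ω j b c && edgeVal ω k c a &&
    downVal ω b i j && downVal ω c j k && downVal ω a i k

/-- 1D triangle indices: a layer and an increasing triple of nodes -/
def Gamma1 (n L : ℕ) : Finset (Fin L × Fin n × Fin n × Fin n) :=
  Finset.univ.filter fun x => x.2.1 < x.2.2.1 ∧ x.2.2.1 < x.2.2.2

/-- 2D triangle indices `(i, j, a, b, c)`: single edge `a-b` (with `a < b`) in layer `i`,
two edges in layer `j ≠ i`, apex node `c` distinct from `a` and `b` -/
def Gamma2 (n L : ℕ) : Finset (Fin L × Fin L × Fin n × Fin n × Fin n) :=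
  Finset.univ.filter fun x =>
    x.1 ≠ x.2.1 ∧ x.2.2.1 < x.2.2.2.1 ∧ x.2.2.2.2 ≠ x.2.2.1 ∧ x.2.2.2.2 ≠ x.2.2.2.1

/-- 3D triangle indices `(i, j, k, a, b, c)`: pairwise distinct layers, `a < b < c` -/
def Gamma3 (n L : ℕ) : Finset (Fin L × Fin L × Fin L × Fin n × Fin n × Fin n) :=
  Finset.univ.filter fun x =>
    x.1 ≠ x.2.1 ∧ x.1 ≠ x.2.2.1 ∧ x.2.1 ≠ x.2.2.1 ∧
      x.2.2.2.1 < x.2.2.2.2.1 ∧ x.2.2.2.2.1 < x.2.2.2.2.2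


/-- covariance of two Bernoulli (triangle presence) indicators under `mu` -/
noncomputable def covX {n L : Nat} (mu : Measure (Config n L)) (X Y : Config n L -> Bool) : Real :=
  (MeasureTheory.integral mu fun w => (if X w then (1:Real) else 0) * (if Y w then (1:Real) else 0))
    - (MeasureTheory.integral mu fun w => if X w then (1:Real) else 0)
      * (MeasureTheory.integral mu fun w => if Y w then (1:Real) else 0)

noncomputable def eprob {n L : ℕ} (p : Fin L → ℝ) (q : ℝ) : EdgeIdx n L → ℝ
  | .inl x => p x.1
  | .inr _ => q

lemma bern_singleton_true {p : ℝ} (h0 : 0 ≤ p) : ((bern p) {true}).toReal = p := by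
  simp [bern, Measure.dirac_apply' _ (measurableSet_singleton _), ENNReal.toReal_ofReal h0]

lemma bern_singleton_false {p : ℝ} (h1 : p ≤ 1) : ((bern p) {false}).toReal = 1 - p := by
  simp [bern, Measure.dirac_apply' _ (measurableSet_singleton _),
    ENNReal.toReal_ofReal (by linarith : (0:ℝ) ≤ 1 - p)]

instance mser_finite (n L : ℕ) (p : Fin L → ℝ) (q : ℝ) : IsFiniteMeasure (mser n L p q) := by
  unfold mser; infer_instance

lemma integral_prod_ind {n L : ℕ} (p : Fin L → ℝ) (q : ℝ)
    (hp : ∀ i, 0 ≤ p i ∧ p i ≤ 1) (hq : 0 ≤ q ∧ q ≤ 1)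
    (S : Finset (EdgeIdx n L)) :
    (∫ ω, (∏ e ∈ S, (if ω e then (1:ℝ) else 0)) ∂ mser n L p q)
      = ∏ e ∈ S, eprob p q e := by
  classical
  have hw_true : ∀ e : EdgeIdx n L, ((edgeBern (n := n) p q e) {true}).toReal = eprob p q e := by
    rintro (x | x)
    · simpa [edgeBern, eprob] using bern_singleton_true (hp x.1).1
    · simpa [edgeBern, eprob] using bern_singleton_true hq.1
  have hw_sum : ∀ e : EdgeIdx n L,
      ((edgeBern (n := n) p q e) {true}).toReal + ((edgeBern (n := n) p q e) {false}).toReal = 1 := by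
    rintro (x | x)
    · show ((bern _) {true}).toReal + ((bern _) {false}).toReal = 1
      rw [bern_singleton_true (hp x.1).1, bern_singleton_false (hp x.1).2]; ring
    · show ((bern q) {true}).toReal + ((bern q) {false}).toReal = 1
      rw [bern_singleton_true hq.1, bern_singleton_false hq.2]; ring
  rw [MeasureTheory.integral_fintype Integrable.of_finite]
  have hsingle : ∀ ω : Config n L,
      ((mser n L p q) {ω}).toReal = ∏ e, ((edgeBern (n := n) p q e) {ω e}).toReal := by
    intro ω
    rw [mser, ← Set.univ_pi_singleton ω, Measure.pi_pi, ENNReal.toReal_prod]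
  calc ∑ ω : Config n L, ((mser n L p q) {ω}).toReal • ∏ e ∈ S, (if ω e then (1:ℝ) else 0)
      = ∑ ω : Config n L, ∏ e, (((edgeBern (n := n) p q e) {ω e}).toReal *
          (if e ∈ S then (if ω e then (1:ℝ) else 0) else 1)) := by
        refine Finset.sum_congr rfl fun ω _ => ?_
        rw [Finset.prod_mul_distrib, hsingle ω, smul_eq_mul, Finset.prod_ite_mem,
          Finset.univ_inter]
    _ = ∏ e, ∑ b : Bool, (((edgeBern (n := n) p q e) {b}).toReal *
          (if e ∈ S then (if b then (1:ℝ) else 0) else 1)) := by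
        rw [Finset.prod_univ_sum]
        rw [← Fintype.piFinset_univ]
    _ = ∏ e, (if e ∈ S then eprob p q e else 1) := by
        refine Finset.prod_congr rfl fun e _ => ?_
        by_cases he : e ∈ S <;> simp [he, Fintype.sum_bool]
        · exact hw_true e
        · linarith [hw_sum e]
    _ = ∏ e ∈ S, eprob p q e := by rw [Finset.prod_ite_mem, Finset.univ_inter]
lemma ind_all {n L : ℕ} (ω : Config n L) (A : Finset (EdgeIdx n L)) :
    (∏ e ∈ A, (if ω e then (1:ℝ) else 0)) = if (∀ e ∈ A, ω e = true) then 1 else 0 := by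
  by_cases h : ∀ e ∈ A, ω e = true
  · rw [if_pos h]; exact Finset.prod_eq_one (fun e he => by rw [h e he]; simp)
  · rw [if_neg h]
    push_neg at h
    obtain ⟨e, he, hne⟩ := h
    exact Finset.prod_eq_zero he (by simp [hne])

def T3 {n L : ℕ} (i j k : Fin L) (a b c : Fin n) : Finset (EdgeIdx n L) :=
  {.inl (ip i a b), .inl (ip j b c), .inl (ip k c a),
   .inr (dp b i j), .inr (dp c j k), .inr (dp a i k)}

def T1 {n L : ℕ} (l : Fin L) (x y z : Fin n) : Finset (EdgeIdx n L) :=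
  {.inl (ip l x y), .inl (ip l x z), .inl (ip l y z)}

lemma tri3_iff {n L : ℕ} (ω : Config n L) (i j k : Fin L) (a b c : Fin n) :
    tri3 ω i j k a b c = true ↔ ∀ e ∈ T3 i j k a b c, ω e = true := by
  simp only [tri3, T3, edgeVal, downVal, Bool.and_eq_true, Finset.forall_mem_insert,
    Finset.mem_singleton, forall_eq]
  tauto

lemma tri1_iff {n L : ℕ} (ω : Config n L) (l : Fin L) (x y z : Fin n) :
    tri1 ω l x y z = true ↔ ∀ e ∈ T1 l x y z, ω e = true := by
  simp only [tri1, T1, edgeVal, Bool.and_eq_true, Finset.forall_mem_insert,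
    Finset.mem_singleton, forall_eq]
  tauto

lemma covX_eq {n L : ℕ} (p : Fin L → ℝ) (q : ℝ)
    (hp : ∀ i, 0 ≤ p i ∧ p i ≤ 1) (hq : 0 ≤ q ∧ q ≤ 1)
    (S T : Finset (EdgeIdx n L)) (X Y : Config n L → Bool)
    (hX : ∀ ω, X ω = true ↔ ∀ e ∈ S, ω e = true)
    (hY : ∀ ω, Y ω = true ↔ ∀ e ∈ T, ω e = true) :
    covX (mser n L p q) X Y
      = (∏ e ∈ S ∪ T, eprob p q e) - (∏ e ∈ S, eprob p q e) * ∏ e ∈ T, eprob p q e := by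
  classical
  have hXf : ∀ ω : Config n L, (if X ω then (1:ℝ) else 0) = ∏ e ∈ S, (if ω e then (1:ℝ) else 0) := by
    intro ω; rw [ind_all]
    by_cases h : X ω = true
    · rw [if_pos h, if_pos ((hX ω).1 h)]
    · rw [if_neg (by simpa using h), if_neg (fun hh => h ((hX ω).2 hh))]
  have hYf : ∀ ω : Config n L, (if Y ω then (1:ℝ) else 0) = ∏ e ∈ T, (if ω e then (1:ℝ) else 0) := by
    intro ω; rw [ind_all]
    by_cases h : Y ω = true
    · rw [if_pos h, if_pos ((hY ω).1 h)]
    · rw [if_neg (by simpa using h), if_neg (fun hh => h ((hY ω).2 hh))]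
  have hXY : (fun ω : Config n L => (if X ω then (1:ℝ) else 0) * (if Y ω then (1:ℝ) else 0))
      = fun ω => ∏ e ∈ S ∪ T, (if ω e then (1:ℝ) else 0) := by
    funext ω
    rw [hXf, hYf, ind_all, ind_all, ind_all]
    by_cases hS : ∀ e ∈ S, ω e = true <;> by_cases hT : ∀ e ∈ T, ω e = true
    · rw [if_pos hS, if_pos hT, if_pos (Finset.forall_mem_union.2 ⟨hS, hT⟩)]; ring
    · rw [if_pos hS, if_neg hT, if_neg (fun h => hT (Finset.forall_mem_union.1 h).2)]; ring
    · rw [if_neg hS, if_pos hT, if_neg (fun h => hS (Finset.forall_mem_union.1 h).1)]; ring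
    · rw [if_neg hS, if_neg hT, if_neg (fun h => hS (Finset.forall_mem_union.1 h).1)]; ring
  unfold covX
  rw [hXY, integral_prod_ind p q hp hq]
  have h1 : (fun ω : Config n L => (if X ω then (1:ℝ) else 0))
      = fun ω => ∏ e ∈ S, (if ω e then (1:ℝ) else 0) := funext hXf
  have h2 : (fun ω : Config n L => (if Y ω then (1:ℝ) else 0))
      = fun ω => ∏ e ∈ T, (if ω e then (1:ℝ) else 0) := funext hYf
  rw [h1, h2, integral_prod_ind p q hp hq, integral_prod_ind p q hp hq]
lemma ip_fst {n L : ℕ} (i : Fin L) (u v : Fin n) : (ip i u v).1 = i := by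
  unfold ip; split <;> rfl

lemma dp_fst {n L : ℕ} (u : Fin n) (i j : Fin L) : (dp (n := n) u i j).1 = u := by
  unfold dp; split <;> rfl

lemma dp_ne {n L : ℕ} {u v : Fin n} (h : u ≠ v) (i j k l : Fin L) :
    dp (n := n) u i j ≠ dp v k l := fun he => h (by rw [← dp_fst u i j, ← dp_fst v k l, he])

lemma eprob_ip {n L : ℕ} (p : Fin L → ℝ) (q : ℝ) (i : Fin L) (u v : Fin n) :
    eprob p q (.inl (ip i u v)) = p i := by
  show p (ip i u v).1 = p i
  rw [ip_fst]

lemma eprob_dp {n L : ℕ} (p : Fin L → ℝ) (q : ℝ) (u : Fin n) (i j : Fin L) :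
    eprob p q (.inr (dp u i j)) = q := rfl

lemma eprob_nonneg {n L : ℕ} (p : Fin L → ℝ) (q : ℝ)
    (hp : ∀ i, 0 ≤ p i ∧ p i ≤ 1) (hq : 0 ≤ q ∧ q ≤ 1) (e : EdgeIdx n L) :
    0 ≤ eprob p q e := by
  rcases e with x | x
  · exact (hp x.1).1
  · exact hq.1

lemma prod_T3 {n L : ℕ} (p : Fin L → ℝ) (q : ℝ) {i j k : Fin L} {a b c : Fin n}
    (hij : i ≠ j) (hik : i ≠ k) (hjk : j ≠ k) (hab : a < b) (hbc : b < c) :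
    ∏ e ∈ T3 i j k a b c, eprob p q e = p i * p j * p k * q ^ 3 := by
  have hac : a < c := hab.trans hbc
  have hab' : a ≠ b := ne_of_lt hab
  have hbc' : b ≠ c := ne_of_lt hbc
  have hac' : a ≠ c := ne_of_lt hac
  have e1 : ip i a b = (i, a, b) := if_pos hab.le
  have e2 : ip j b c = (j, b, c) := if_pos hbc.le
  have e3 : ip k c a = (k, a, c) := if_neg (not_le.2 hac)
  have m1 : (Sum.inl (ip i a b) : EdgeIdx n L) ∉
      ({.inl (ip j b c), .inl (ip k c a), .inr (dp b i j), .inr (dp c j k), .inr (dp a i k)} :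
        Finset (EdgeIdx n L)) := by
    simp only [Finset.mem_insert, Finset.mem_singleton, e1, e2, e3]
    simp [Prod.ext_iff, hij, hik]
  have m2 : (Sum.inl (ip j b c) : EdgeIdx n L) ∉
      ({.inl (ip k c a), .inr (dp b i j), .inr (dp c j k), .inr (dp a i k)} :
        Finset (EdgeIdx n L)) := by
    simp only [Finset.mem_insert, Finset.mem_singleton, e2, e3]
    simp [Prod.ext_iff, hjk]
  have m3 : (Sum.inl (ip k c a) : EdgeIdx n L) ∉
      ({.inr (dp b i j), .inr (dp c j k), .inr (dp a i k)} : Finset (EdgeIdx n L)) := by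
    simp
  have m4 : (Sum.inr (dp b i j) : EdgeIdx n L) ∉
      ({.inr (dp c j k), .inr (dp a i k)} : Finset (EdgeIdx n L)) := by
    simp only [Finset.mem_insert, Finset.mem_singleton]
    push_neg
    exact ⟨fun h => dp_ne hbc' i j j k (Sum.inr.inj h),
           fun h => dp_ne (Ne.symm hab') i j i k (Sum.inr.inj h)⟩
  have m5 : (Sum.inr (dp c j k) : EdgeIdx n L) ∉
      ({.inr (dp a i k)} : Finset (EdgeIdx n L)) := by
    simp only [Finset.mem_singleton]
    exact fun h => dp_ne (Ne.symm hac') j k i k (Sum.inr.inj h)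
  unfold T3
  rw [Finset.prod_insert m1, Finset.prod_insert m2, Finset.prod_insert m3,
    Finset.prod_insert m4, Finset.prod_insert m5, Finset.prod_singleton,
    eprob_ip, eprob_ip, eprob_ip, eprob_dp, eprob_dp, eprob_dp]
  ring
lemma mem_T1 {n L : ℕ} {l : Fin L} {x y z : Fin n} {e : EdgeIdx n L}
    (he : e ∈ T1 l x y z) :
    e = .inl (ip l x y) ∨ e = .inl (ip l x z) ∨ e = .inl (ip l y z) := by
  simpa [T1, Finset.mem_insert, Finset.mem_singleton] using he

lemma eprob_T1 {n L : ℕ} (p : Fin L → ℝ) (q : ℝ) {l : Fin L} {x y z : Fin n} {e : EdgeIdx n L}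
    (he : e ∈ T1 l x y z) : eprob p q e = p l := by
  rcases mem_T1 he with h | h | h <;> rw [h, eprob_ip]

lemma card_T1 {n L : ℕ} {l : Fin L} {x y z : Fin n} (hxy : x < y) (hyz : y < z) :
    (T1 l x y z).card = 3 := by
  have e1 : ip l x y = (l, x, y) := if_pos hxy.le
  have e2 : ip l x z = (l, x, z) := if_pos (hxy.trans hyz).le
  have e3 : ip l y z = (l, y, z) := if_pos hyz.le
  have hyz' : y ≠ z := ne_of_lt hyz
  have hxy' : x ≠ y := ne_of_lt hxy
  rw [T1, Finset.card_insert_of_notMem, Finset.card_insert_of_notMem, Finset.card_singleton]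
  · simp only [Finset.mem_singleton, e2, e3]
    simp [Prod.ext_iff, hxy']
  · simp only [Finset.mem_insert, Finset.mem_singleton, e1, e2, e3]
    simp [Prod.ext_iff, hyz', hxy']

/-- classification of elements in the intersection -/
lemma mem_inter_T1_T3 {n L : ℕ} {i j k l : Fin L} {a b c x y z : Fin n}
    {e : EdgeIdx n L} (he1 : e ∈ T1 l x y z) (he3 : e ∈ T3 i j k a b c) :
    (l = i ∧ e = .inl (ip i a b)) ∨ (l = j ∧ e = .inl (ip j b c)) ∨
      (l = k ∧ e = .inl (ip k c a)) := by
  have hl : ∀ u v : Fin n, e = .inl (ip l u v) → e.elim (fun w => w.1) (fun _ => l) = l := by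
    rintro u v rfl; simp [ip_fst]
  have hfst : e.elim (fun w => (w.1 : Fin L)) (fun _ => l) = l := by
    rcases mem_T1 he1 with h | h | h
    exacts [hl _ _ h, hl _ _ h, hl _ _ h]
  have he3' : e = .inl (ip i a b) ∨ e = .inl (ip j b c) ∨ e = .inl (ip k c a) ∨
      e = .inr (dp b i j) ∨ e = .inr (dp c j k) ∨ e = .inr (dp a i k) := by
    simpa [T3, Finset.mem_insert, Finset.mem_singleton] using he3
  have hinl : ∀ (m : Fin L) (u v : Fin n), e = .inl (ip m u v) → l = m := by
    rintro m u v rfl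
    simp [ip_fst] at hfst
    exact hfst.symm
  have hninr : ∀ (u : Fin n) (m m' : Fin L), e ≠ .inr (dp u m m') := by
    rintro u m m' rfl
    rcases mem_T1 he1 with h | h | h <;> exact absurd h (by simp)
  rcases he3' with h | h | h | h | h | h
  · exact Or.inl ⟨hinl _ _ _ h, h⟩
  · exact Or.inr (Or.inl ⟨hinl _ _ _ h, h⟩)
  · exact Or.inr (Or.inr ⟨hinl _ _ _ h, h⟩)
  all_goals exact absurd h (hninr _ _ _)

lemma card_inter_T1_T3 {n L : ℕ} {i j k l : Fin L} {a b c x y z : Fin n}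
    (hij : i ≠ j) (hik : i ≠ k) (hjk : j ≠ k) :
    (T1 l x y z ∩ T3 i j k a b c).card ≤ 1 := by
  refine Finset.card_le_one.2 fun e he f hf => ?_
  rw [Finset.mem_inter] at he hf
  rcases mem_inter_T1_T3 he.1 he.2 with ⟨hle, he'⟩ | ⟨hle, he'⟩ | ⟨hle, he'⟩ <;>
    rcases mem_inter_T1_T3 hf.1 hf.2 with ⟨hlf, hf'⟩ | ⟨hlf, hf'⟩ | ⟨hlf, hf'⟩ <;>
      first
        | (exact absurd (hle.symm.trans hlf) hij)
        | (exact absurd (hle.symm.trans hlf) hik)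
        | (exact absurd (hle.symm.trans hlf) hjk)
        | (exact absurd (hle.symm.trans hlf) (Ne.symm hij))
        | (exact absurd (hle.symm.trans hlf) (Ne.symm hik))
        | (exact absurd (hle.symm.trans hlf) (Ne.symm hjk))
        | (rw [he', hf'])
lemma pair_bound {n L : ℕ} (p : Fin L → ℝ) (q : ℝ)
    (hp : ∀ i, 0 ≤ p i ∧ p i ≤ 1) (hq : 0 ≤ q ∧ q ≤ 1)
    {i j k l : Fin L} {a b c x y z : Fin n}
    (hij : i ≠ j) (hik : i ≠ k) (hjk : j ≠ k)
    (hab : a < b) (hbc : b < c) (hxy : x < y) (hyz : y < z) :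
    covX (mser n L p q) (fun ω => tri3 ω i j k a b c) (fun ω => tri1 ω l x y z)
      ≤ if Disjoint (T1 l x y z) (T3 i j k a b c) then 0
        else p l ^ 2 * (p i * p j * p k * q ^ 3) := by
  rw [covX_eq p q hp hq (T3 i j k a b c) (T1 l x y z) _ _
    (fun ω => tri3_iff ω i j k a b c) (fun ω => tri1_iff ω l x y z)]
  have hnn : ∀ (A : Finset (EdgeIdx n L)), 0 ≤ ∏ e ∈ A, eprob p q e :=
    fun A => Finset.prod_nonneg fun e _ => eprob_nonneg p q hp hq e
  by_cases hd : Disjoint (T1 l x y z) (T3 i j k a b c)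
  · rw [if_pos hd, Finset.prod_union hd.symm]
    simp
  · rw [if_neg hd]
    have hU : T3 i j k a b c ∪ T1 l x y z
        = T3 i j k a b c ∪ (T1 l x y z \ T3 i j k a b c) := by
      rw [Finset.union_sdiff_self_eq_union]
    have hsd : ∏ e ∈ T1 l x y z \ T3 i j k a b c, eprob p q e
        = p l ^ (T1 l x y z \ T3 i j k a b c).card := by
      rw [Finset.prod_congr rfl
        (fun e he => eprob_T1 p q (Finset.mem_sdiff.1 he).1), Finset.prod_const]
    have hcard : 2 ≤ (T1 l x y z \ T3 i j k a b c).card := by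
      have h1 := Finset.card_sdiff_add_card_inter (T1 l x y z) (T3 i j k a b c)
      have h2 := card_inter_T1_T3 (l := l) (x := x) (y := y) (z := z)
        (a := a) (b := b) (c := c) hij hik hjk
      rw [card_T1 hxy hyz] at h1
      omega
    calc (∏ e ∈ T3 i j k a b c ∪ T1 l x y z, eprob p q e)
          - (∏ e ∈ T3 i j k a b c, eprob p q e) * ∏ e ∈ T1 l x y z, eprob p q e
        ≤ ∏ e ∈ T3 i j k a b c ∪ T1 l x y z, eprob p q e :=
          sub_le_self _ (mul_nonneg (hnn _) (hnn _))
      _ = (∏ e ∈ T3 i j k a b c, eprob p q e)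
            * ∏ e ∈ T1 l x y z \ T3 i j k a b c, eprob p q e := by
          rw [hU, Finset.prod_union Finset.disjoint_sdiff]
      _ ≤ (p i * p j * p k * q ^ 3) * p l ^ 2 := by
          rw [prod_T3 p q hij hik hjk hab hbc, hsd]
          refine mul_le_mul_of_nonneg_left
            (pow_le_pow_of_le_one (hp l).1 (hp l).2 hcard)
            (mul_nonneg (mul_nonneg (mul_nonneg (hp i).1 (hp j).1) (hp k).1)
              (pow_nonneg hq.1 3))
      _ = p l ^ 2 * (p i * p j * p k * q ^ 3) := by ring
lemma ip_inj_iff {n L : ℕ} {m m' : Fin L} {u v x y : Fin n} (h1 : u ≤ v) (h2 : x ≤ y) :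
    ip m u v = ip m' x y ↔ m = m' ∧ u = x ∧ v = y := by
  unfold ip
  rw [if_pos h1, if_pos h2]
  simp [Prod.ext_iff]

lemma card_share {n L : ℕ} (m : Fin L) (u v : Fin n) (huv : u < v) :
    ((Gamma1 n L).filter (fun β => β.1 = m ∧
        (Sum.inl (ip m u v) : EdgeIdx n L) ∈ T1 β.1 β.2.1 β.2.2.1 β.2.2.2)).card
      ≤ n - 2 := by
  classical
  set g : Fin n → Fin L × Fin n × Fin n × Fin n := fun t =>
    (m, if t < u then (t, u, v) else if t < v then (u, t, v) else (u, v, t)) with hg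
  have hsub : (Gamma1 n L).filter (fun β => β.1 = m ∧
        (Sum.inl (ip m u v) : EdgeIdx n L) ∈ T1 β.1 β.2.1 β.2.2.1 β.2.2.2)
      ⊆ ((Finset.univ.erase u).erase v).image g := by
    rintro ⟨l, x, y, z⟩ hβ
    rw [Finset.mem_filter] at hβ
    obtain ⟨hΓ, hlm, hmem⟩ := hβ
    simp only [Gamma1, Finset.mem_filter] at hΓ
    obtain ⟨-, hxy, hyz⟩ := hΓ
    obtain rfl : m = l := hlm.symm
    have hmem' : ip m u v = ip m x y ∨ ip m u v = ip m x z ∨ ip m u v = ip m y z := by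
      simpa [T1, Finset.mem_insert, Finset.mem_singleton] using hmem
    rw [Finset.mem_image]
    rcases hmem' with h | h | h
    · obtain ⟨-, rfl, rfl⟩ := (ip_inj_iff huv.le hxy.le).1 h
      refine ⟨z, ?_, ?_⟩
      · rw [Finset.mem_erase, Finset.mem_erase]
        exact ⟨ne_of_gt hyz, ne_of_gt (hxy.trans hyz), Finset.mem_univ z⟩
      · rw [hg]
        simp only [if_neg (not_lt.2 (hxy.trans hyz).le), if_neg (not_lt.2 hyz.le)]
    · obtain ⟨-, rfl, rfl⟩ := (ip_inj_iff huv.le (hxy.trans hyz).le).1 h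
      refine ⟨y, ?_, ?_⟩
      · rw [Finset.mem_erase, Finset.mem_erase]
        exact ⟨ne_of_lt hyz, ne_of_gt hxy, Finset.mem_univ y⟩
      · rw [hg]
        simp only [if_neg (not_lt.2 hxy.le), if_pos hyz]
    · obtain ⟨-, rfl, rfl⟩ := (ip_inj_iff huv.le hyz.le).1 h
      refine ⟨x, ?_, ?_⟩
      · rw [Finset.mem_erase, Finset.mem_erase]
        exact ⟨ne_of_lt (hxy.trans hyz), ne_of_lt hxy, Finset.mem_univ x⟩
      · rw [hg]
        simp only [if_pos hxy]
  calc ((Gamma1 n L).filter _).card ≤ (((Finset.univ.erase u).erase v).image g).card :=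
        Finset.card_le_card hsub
    _ ≤ ((Finset.univ.erase u).erase v).card := Finset.card_image_le
    _ = n - 2 := by
        rw [Finset.card_erase_of_mem, Finset.card_erase_of_mem (Finset.mem_univ u),
          Finset.card_univ, Fintype.card_fin]
        · rfl
        · exact Finset.mem_erase.2 ⟨ne_of_gt huv, Finset.mem_univ v⟩
lemma sum_union_le' {γ : Type*} [DecidableEq γ] {s t : Finset γ} {f : γ → ℝ}
    (hf : ∀ x, 0 ≤ f x) : ∑ x ∈ s ∪ t, f x ≤ ∑ x ∈ s, f x + ∑ x ∈ t, f x := by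
  have h : ∑ x ∈ s ∪ t, f x + ∑ x ∈ s ∩ t, f x = ∑ x ∈ s, f x + ∑ x ∈ t, f x :=
    Finset.sum_union_inter
  have h2 : 0 ≤ ∑ x ∈ s ∩ t, f x := Finset.sum_nonneg fun x _ => hf x
  linarith

lemma innerSum31 {n L : ℕ} (p : Fin L → ℝ) (q : ℝ)
    (hp : ∀ i, 0 ≤ p i ∧ p i ≤ 1) (hq : 0 ≤ q ∧ q ≤ 1)
    {i j k : Fin L} {a b c : Fin n}
    (hij : i ≠ j) (hik : i ≠ k) (hjk : j ≠ k) (hab : a < b) (hbc : b < c) :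
    ∑ β ∈ Gamma1 n L,
        covX (mser n L p q) (fun ω => tri3 ω i j k a b c)
          (fun ω => tri1 ω β.1 β.2.1 β.2.2.1 β.2.2.2)
      ≤ ((n - 2 : ℕ) : ℝ) * ((p i ^ 2 + p j ^ 2 + p k ^ 2) * (p i * p j * p k * q ^ 3)) := by
  classical
  have hac : a < c := hab.trans hbc
  set P3 : ℝ := p i * p j * p k * q ^ 3 with hP3
  have hP3nn : 0 ≤ P3 := mul_nonneg (mul_nonneg (mul_nonneg (hp i).1 (hp j).1) (hp k).1)
    (pow_nonneg hq.1 3)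
  have hfnn : ∀ β : Fin L × Fin n × Fin n × Fin n, 0 ≤ p β.1 ^ 2 * P3 :=
    fun β => mul_nonneg (pow_nonneg (hp β.1).1 2) hP3nn
  have step1 : ∑ β ∈ Gamma1 n L,
        covX (mser n L p q) (fun ω => tri3 ω i j k a b c)
          (fun ω => tri1 ω β.1 β.2.1 β.2.2.1 β.2.2.2)
      ≤ ∑ β ∈ Gamma1 n L,
          (if Disjoint (T1 β.1 β.2.1 β.2.2.1 β.2.2.2) (T3 i j k a b c) then 0
            else p β.1 ^ 2 * P3) := by
    refine Finset.sum_le_sum fun β hβ => ?_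
    have hβ' : β.2.1 < β.2.2.1 ∧ β.2.2.1 < β.2.2.2 := by
      simpa [Gamma1] using hβ
    exact pair_bound p q hp hq hij hik hjk hab hbc hβ'.1 hβ'.2
  have step2 : ∑ β ∈ Gamma1 n L,
        (if Disjoint (T1 β.1 β.2.1 β.2.2.1 β.2.2.2) (T3 i j k a b c) then 0
          else p β.1 ^ 2 * P3)
      = ∑ β ∈ (Gamma1 n L).filter
            (fun β => ¬ Disjoint (T1 β.1 β.2.1 β.2.2.1 β.2.2.2) (T3 i j k a b c)),
          p β.1 ^ 2 * P3 := by
    rw [Finset.sum_filter]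
    exact Finset.sum_congr rfl fun β _ => by
      by_cases h : Disjoint (T1 β.1 β.2.1 β.2.2.1 β.2.2.2) (T3 i j k a b c) <;> simp [h]
  set Fi := (Gamma1 n L).filter (fun β : Fin L × Fin n × Fin n × Fin n => β.1 = i ∧
    (Sum.inl (ip i a b) : EdgeIdx n L) ∈ T1 β.1 β.2.1 β.2.2.1 β.2.2.2) with hFi
  set Fj := (Gamma1 n L).filter (fun β : Fin L × Fin n × Fin n × Fin n => β.1 = j ∧
    (Sum.inl (ip j b c) : EdgeIdx n L) ∈ T1 β.1 β.2.1 β.2.2.1 β.2.2.2) with hFj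
  set Fk := (Gamma1 n L).filter (fun β : Fin L × Fin n × Fin n × Fin n => β.1 = k ∧
    (Sum.inl (ip k c a) : EdgeIdx n L) ∈ T1 β.1 β.2.1 β.2.2.1 β.2.2.2) with hFk
  have hsub : (Gamma1 n L).filter
      (fun β => ¬ Disjoint (T1 β.1 β.2.1 β.2.2.1 β.2.2.2) (T3 i j k a b c))
      ⊆ (Fi ∪ Fj) ∪ Fk := by
    intro β hβ
    rw [Finset.mem_filter] at hβ
    obtain ⟨hβΓ, hnd⟩ := hβ
    obtain ⟨e, he1, he3⟩ := Finset.not_disjoint_iff.1 hnd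
    rcases mem_inter_T1_T3 he1 he3 with ⟨hl, he⟩ | ⟨hl, he⟩ | ⟨hl, he⟩
    · exact Finset.mem_union_left _ (Finset.mem_union_left _
        (Finset.mem_filter.2 ⟨hβΓ, hl, he ▸ he1⟩))
    · exact Finset.mem_union_left _ (Finset.mem_union_right _
        (Finset.mem_filter.2 ⟨hβΓ, hl, he ▸ he1⟩))
    · exact Finset.mem_union_right _ (Finset.mem_filter.2 ⟨hβΓ, hl, he ▸ he1⟩)
  have hconst : ∀ (m : Fin L) (F : Finset (Fin L × Fin n × Fin n × Fin n)),
      (∀ β ∈ F, β.1 = m) → ∑ β ∈ F, p β.1 ^ 2 * P3 = F.card * (p m ^ 2 * P3) := by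
    intro m F hF
    rw [Finset.sum_congr rfl (fun β hβ => by rw [hF β hβ]), Finset.sum_const,
      nsmul_eq_mul]
  have hcardFi : (Fi.card : ℝ) ≤ ((n - 2 : ℕ) : ℝ) :=
    Nat.cast_le.2 (card_share i a b hab)
  have hcardFj : (Fj.card : ℝ) ≤ ((n - 2 : ℕ) : ℝ) :=
    Nat.cast_le.2 (card_share j b c hbc)
  have hkca : ip (n := n) k c a = ip k a c := by
    unfold ip
    rw [if_neg (not_le.2 hac), if_pos hac.le]
  have hcardFk : (Fk.card : ℝ) ≤ ((n - 2 : ℕ) : ℝ) := by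
    refine Nat.cast_le.2 ?_
    have : Fk = (Gamma1 n L).filter (fun β : Fin L × Fin n × Fin n × Fin n => β.1 = k ∧
        (Sum.inl (ip k a c) : EdgeIdx n L) ∈ T1 β.1 β.2.1 β.2.2.1 β.2.2.2) := by
      rw [hFk, hkca]
    rw [this]
    exact card_share k a c hac
  have hFim : ∀ β ∈ Fi, β.1 = i := fun β hβ => ((Finset.mem_filter.1 hβ).2).1
  have hFjm : ∀ β ∈ Fj, β.1 = j := fun β hβ => ((Finset.mem_filter.1 hβ).2).1
  have hFkm : ∀ β ∈ Fk, β.1 = k := fun β hβ => ((Finset.mem_filter.1 hβ).2).1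
  have step3 : ∑ β ∈ (Gamma1 n L).filter
        (fun β => ¬ Disjoint (T1 β.1 β.2.1 β.2.2.1 β.2.2.2) (T3 i j k a b c)),
        p β.1 ^ 2 * P3
      ≤ ∑ β ∈ Fi, p β.1 ^ 2 * P3 + ∑ β ∈ Fj, p β.1 ^ 2 * P3 + ∑ β ∈ Fk, p β.1 ^ 2 * P3 := by
    calc _ ≤ ∑ β ∈ (Fi ∪ Fj) ∪ Fk, p β.1 ^ 2 * P3 :=
          Finset.sum_le_sum_of_subset_of_nonneg hsub (fun β _ _ => hfnn β)
      _ ≤ ∑ β ∈ Fi ∪ Fj, p β.1 ^ 2 * P3 + ∑ β ∈ Fk, p β.1 ^ 2 * P3 := sum_union_le' hfnn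
      _ ≤ _ := by
          have := sum_union_le' (s := Fi) (t := Fj) hfnn
          linarith
  have hbnd : ∀ (m : Fin L) (F : Finset (Fin L × Fin n × Fin n × Fin n)),
      (∀ β ∈ F, β.1 = m) → ((F.card : ℝ) ≤ ((n - 2 : ℕ) : ℝ)) →
      ∑ β ∈ F, p β.1 ^ 2 * P3 ≤ ((n - 2 : ℕ) : ℝ) * (p m ^ 2 * P3) := by
    intro m F h1 h2
    rw [hconst m F h1]
    exact mul_le_mul_of_nonneg_right h2 (mul_nonneg (pow_nonneg (hp m).1 2) hP3nn)
  have final := add_le_add (add_le_add (hbnd i Fi hFim hcardFi) (hbnd j Fj hFjm hcardFj))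
    (hbnd k Fk hFkm hcardFk)
  calc _ ≤ _ := step1
    _ = _ := step2
    _ ≤ _ := step3
    _ ≤ ((n - 2 : ℕ) : ℝ) * (p i ^ 2 * P3) + ((n - 2 : ℕ) : ℝ) * (p j ^ 2 * P3)
        + ((n - 2 : ℕ) : ℝ) * (p k ^ 2 * P3) := final
    _ = ((n - 2 : ℕ) : ℝ) * ((p i ^ 2 + p j ^ 2 + p k ^ 2) * P3) := by ring
def TLset (L : ℕ) : Finset (Fin L × Fin L × Fin L) :=
  Finset.univ.filter fun t => t.1 ≠ t.2.1 ∧ t.1 ≠ t.2.2 ∧ t.2.1 ≠ t.2.2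

def TNset (n : ℕ) : Finset (Fin n × Fin n × Fin n) :=
  Finset.univ.filter fun s => s.1 < s.2.1 ∧ s.2.1 < s.2.2

lemma card_TN (n : ℕ) : (TNset n).card ≤ Nat.choose n 3 := by
  classical
  have h : ∀ s ∈ TNset n, (fun s : Fin n × Fin n × Fin n =>
      ({s.1, s.2.1, s.2.2} : Finset (Fin n))) s ∈ Finset.univ.powersetCard 3 := by
    rintro ⟨a, b, c⟩ hs
    simp only [TNset, Finset.mem_filter] at hs
    obtain ⟨-, hab, hbc⟩ := hs
    rw [Finset.mem_powersetCard]
    refine ⟨Finset.subset_univ _, ?_⟩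
    rw [Finset.card_insert_of_notMem, Finset.card_insert_of_notMem, Finset.card_singleton]
    · simp only [Finset.mem_singleton]; fin_omega
    · simp only [Finset.mem_insert, Finset.mem_singleton]; push_neg
      constructor <;> fin_omega
  have hinj : Set.InjOn (fun s : Fin n × Fin n × Fin n =>
      ({s.1, s.2.1, s.2.2} : Finset (Fin n))) (TNset n) := by
    rintro ⟨a, b, c⟩ hs ⟨x, y, z⟩ ht heq
    simp only [TNset, Finset.mem_filter, Finset.coe_filter, Set.mem_setOf_eq] at hs ht
    obtain ⟨-, hab, hbc⟩ := hs
    obtain ⟨-, hxy, hyz⟩ := ht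
    simp only at heq
    have h1 : x = a ∨ x = b ∨ x = c := by
      have : x ∈ ({a, b, c} : Finset (Fin n)) := by
        rw [heq]; simp
      simpa using this
    have h2 : y = a ∨ y = b ∨ y = c := by
      have : y ∈ ({a, b, c} : Finset (Fin n)) := by
        rw [heq]; simp
      simpa using this
    have h3 : z = a ∨ z = b ∨ z = c := by
      have : z ∈ ({a, b, c} : Finset (Fin n)) := by
        rw [heq]; simp
      simpa using this
    have h4 : a = x ∨ a = y ∨ a = z := by
      have : a ∈ ({x, y, z} : Finset (Fin n)) := by
        rw [← heq]; simp
      simpa using this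
    simp only [Prod.mk.injEq]
    refine ⟨?_, ?_, ?_⟩ <;> fin_omega
  calc (TNset n).card ≤ (Finset.univ.powersetCard 3 : Finset (Finset (Fin n))).card :=
        Finset.card_le_card_of_injOn _ h hinj
    _ = Nat.choose n 3 := by
        rw [Finset.card_powersetCard, Finset.card_univ, Fintype.card_fin]

lemma sum_TL_eq {L : ℕ} (f : Fin L → Fin L → Fin L → ℝ) :
    ∑ t ∈ TLset L, f t.1 t.2.1 t.2.2
      = ∑ i, ∑ j ∈ Finset.univ.erase i, ∑ k ∈ (Finset.univ.erase i).erase j, f i j k := by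
  classical
  have herase : ∀ i j : Fin L, (Finset.univ.erase i).erase j
      = Finset.univ.filter (fun k => k ≠ i ∧ k ≠ j) := by
    intro i j
    rw [← Finset.filter_ne', ← Finset.filter_ne', Finset.filter_filter]
  have herase1 : ∀ i : Fin L, Finset.univ.erase i = Finset.univ.filter (· ≠ i) :=
    fun i => (Finset.filter_ne' _ _).symm
  simp only [herase]
  simp only [herase1]
  simp only [Finset.sum_filter]
  rw [TLset, Finset.sum_filter, Fintype.sum_prod_type]
  refine Finset.sum_congr rfl fun i _ => ?_
  rw [Fintype.sum_prod_type]
  refine Finset.sum_congr rfl fun j _ => ?_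
  by_cases hji : j = i
  · subst hji
    simp
  · rw [if_pos hji]
    refine Finset.sum_congr rfl fun k _ => ?_
    by_cases hkj : k = j
    · subst hkj
      simp
    · by_cases hki : k = i
      · subst hki
        simp [Ne.symm hji]
      · simp [hji, hkj, hki, Ne.symm hji, Ne.symm hkj, Ne.symm hki]
lemma sym3 {L : ℕ} (p : Fin L → ℝ) (q : ℝ) :
    ∑ t ∈ TLset L, ((p t.1 ^ 2 + p t.2.1 ^ 2 + p t.2.2 ^ 2)
        * (p t.1 * p t.2.1 * p t.2.2 * q ^ 3))
      = 3 * ∑ t ∈ TLset L, p t.1 ^ 3 * p t.2.1 * p t.2.2 * q ^ 3 := by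
  classical
  have hmem : ∀ (σ : Fin L × Fin L × Fin L → Fin L × Fin L × Fin L),
      (∀ t : Fin L × Fin L × Fin L,
        ((σ t).1 = t.1 ∨ (σ t).1 = t.2.1 ∨ (σ t).1 = t.2.2)) → True := fun _ _ => trivial
  have hB : ∑ t ∈ TLset L, p t.2.1 ^ 3 * p t.1 * p t.2.2 * q ^ 3
      = ∑ t ∈ TLset L, p t.1 ^ 3 * p t.2.1 * p t.2.2 * q ^ 3 := by
    refine Finset.sum_nbij' (fun t => (t.2.1, t.1, t.2.2)) (fun t => (t.2.1, t.1, t.2.2))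
      ?_ ?_ ?_ ?_ ?_
    · rintro ⟨i, j, k⟩ ht
      simp only [TLset, Finset.mem_filter, Finset.mem_univ, true_and] at ht ⊢
      tauto
    · rintro ⟨i, j, k⟩ ht
      simp only [TLset, Finset.mem_filter, Finset.mem_univ, true_and] at ht ⊢
      tauto
    · rintro ⟨i, j, k⟩ _; rfl
    · rintro ⟨i, j, k⟩ _; rfl
    · rintro ⟨i, j, k⟩ _; ring
  have hC : ∑ t ∈ TLset L, p t.2.2 ^ 3 * p t.2.1 * p t.1 * q ^ 3
      = ∑ t ∈ TLset L, p t.1 ^ 3 * p t.2.1 * p t.2.2 * q ^ 3 := by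
    refine Finset.sum_nbij' (fun t => (t.2.2, t.2.1, t.1)) (fun t => (t.2.2, t.2.1, t.1))
      ?_ ?_ ?_ ?_ ?_
    · rintro ⟨i, j, k⟩ ht
      simp only [TLset, Finset.mem_filter, Finset.mem_univ, true_and] at ht ⊢
      tauto
    · rintro ⟨i, j, k⟩ ht
      simp only [TLset, Finset.mem_filter, Finset.mem_univ, true_and] at ht ⊢
      tauto
    · rintro ⟨i, j, k⟩ _; rfl
    · rintro ⟨i, j, k⟩ _; rfl
    · rintro ⟨i, j, k⟩ _; ring
  have hsplit : ∑ t ∈ TLset L, ((p t.1 ^ 2 + p t.2.1 ^ 2 + p t.2.2 ^ 2)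
        * (p t.1 * p t.2.1 * p t.2.2 * q ^ 3))
      = ∑ t ∈ TLset L, p t.1 ^ 3 * p t.2.1 * p t.2.2 * q ^ 3
        + ∑ t ∈ TLset L, p t.2.1 ^ 3 * p t.1 * p t.2.2 * q ^ 3
        + ∑ t ∈ TLset L, p t.2.2 ^ 3 * p t.2.1 * p t.1 * q ^ 3 := by
    rw [← Finset.sum_add_distrib, ← Finset.sum_add_distrib]
    exact Finset.sum_congr rfl fun t _ => by ring
  rw [hsplit, hB, hC]
  ring
theorem R31_bound (n L : ℕ) (p : Fin L → ℝ) (q : ℝ)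
    (hp : ∀ i, 0 ≤ p i ∧ p i ≤ 1) (hq : 0 ≤ q ∧ q ≤ 1) :
    (∑ α ∈ Gamma3 n L, ∑ β ∈ Gamma1 n L,
        covX (mser n L p q)
          (fun ω => tri3 ω α.1 α.2.1 α.2.2.1 α.2.2.2.1 α.2.2.2.2.1 α.2.2.2.2.2)
          (fun ω => tri1 ω β.1 β.2.1 β.2.2.1 β.2.2.2))
        ≤ 3 * (Nat.choose n 3 : ℝ) * ((n : ℝ) - 2) *
            ∑ i, ∑ j ∈ Finset.univ.erase i, ∑ k ∈ (Finset.univ.erase i).erase j,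
              p i ^ 3 * p j * p k * q ^ 3
    ∧ (∑ α ∈ Gamma3 n L, ∑ β ∈ Gamma1 n L,
        covX (mser n L p q)
          (fun ω => tri3 ω α.1 α.2.1 α.2.2.1 α.2.2.2.1 α.2.2.2.2.1 α.2.2.2.2.2)
          (fun ω => tri1 ω β.1 β.2.1 β.2.2.1 β.2.2.2))
        ≤ 1 / 2 * (n : ℝ) ^ 4 *
            ∑ i, ∑ j ∈ Finset.univ.erase i, ∑ k ∈ (Finset.univ.erase i).erase j,
              p i ^ 3 * p j * p k * q ^ 3 := by
  classical
  set SS : ℝ := ∑ i, ∑ j ∈ Finset.univ.erase i, ∑ k ∈ (Finset.univ.erase i).erase j,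
      p i ^ 3 * p j * p k * q ^ 3 with hSS
  have hSS_eq : ∑ t ∈ TLset L, p t.1 ^ 3 * p t.2.1 * p t.2.2 * q ^ 3 = SS :=
    sum_TL_eq (fun i j k => p i ^ 3 * p j * p k * q ^ 3)
  have hSSnn : 0 ≤ SS := by
    rw [← hSS_eq]
    refine Finset.sum_nonneg fun t _ => ?_
    have h1 := (hp t.1).1; have h2 := (hp t.2.1).1; have h3 := (hp t.2.2).1
    have h4 := hq.1
    positivity
  set W : ℝ := ∑ α ∈ Gamma3 n L, ∑ β ∈ Gamma1 n L,
      covX (mser n L p q)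
        (fun ω => tri3 ω α.1 α.2.1 α.2.2.1 α.2.2.2.1 α.2.2.2.2.1 α.2.2.2.2.2)
        (fun ω => tri1 ω β.1 β.2.1 β.2.2.1 β.2.2.2) with hW
  set C2 : ℝ := ((n - 2 : ℕ) : ℝ) with hC2
  have hC2nn : 0 ≤ C2 := Nat.cast_nonneg _
  set G : Fin L × Fin L × Fin L → ℝ := fun t =>
    (p t.1 ^ 2 + p t.2.1 ^ 2 + p t.2.2 ^ 2) * (p t.1 * p t.2.1 * p t.2.2 * q ^ 3) with hG
  have step1 : W ≤ ∑ α ∈ Gamma3 n L, C2 * G (α.1, α.2.1, α.2.2.1) := by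
    refine Finset.sum_le_sum fun α hα => ?_
    have hα' : α.1 ≠ α.2.1 ∧ α.1 ≠ α.2.2.1 ∧ α.2.1 ≠ α.2.2.1 ∧
        α.2.2.2.1 < α.2.2.2.2.1 ∧ α.2.2.2.2.1 < α.2.2.2.2.2 := by
      simpa [Gamma3] using hα
    exact innerSum31 p q hp hq hα'.1 hα'.2.1 hα'.2.2.1 hα'.2.2.2.1 hα'.2.2.2.2
  have step2 : ∑ α ∈ Gamma3 n L, C2 * G (α.1, α.2.1, α.2.2.1)
      = ∑ x ∈ TLset L ×ˢ TNset n, C2 * G x.1 := by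
    refine Finset.sum_nbij'
      (fun α => ((α.1, α.2.1, α.2.2.1), (α.2.2.2.1, α.2.2.2.2.1, α.2.2.2.2.2)))
      (fun x => (x.1.1, x.1.2.1, x.1.2.2, x.2.1, x.2.2.1, x.2.2.2)) ?_ ?_ ?_ ?_ ?_
    · rintro ⟨i, j, k, a, b, c⟩ hα
      simp only [Gamma3, Finset.mem_filter, Finset.mem_univ, true_and] at hα
      simp only [TLset, TNset, Finset.mem_product, Finset.mem_filter, Finset.mem_univ,
        true_and]
      tauto
    · rintro ⟨⟨i, j, k⟩, ⟨a, b, c⟩⟩ hx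
      simp only [TLset, TNset, Finset.mem_product, Finset.mem_filter, Finset.mem_univ,
        true_and] at hx
      simp only [Gamma3, Finset.mem_filter, Finset.mem_univ, true_and]
      tauto
    · rintro ⟨i, j, k, a, b, c⟩ _; rfl
    · rintro ⟨⟨i, j, k⟩, ⟨a, b, c⟩⟩ _; rfl
    · rintro ⟨i, j, k, a, b, c⟩ _; rfl
  have step3 : ∑ x ∈ TLset L ×ˢ TNset n, C2 * G x.1
      = ((TNset n).card : ℝ) * (C2 * (3 * SS)) := by
    rw [Finset.sum_product]
    have : ∀ t ∈ TLset L, ∑ _s ∈ TNset n, C2 * G t = ((TNset n).card : ℝ) * (C2 * G t) :=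
      fun t _ => by rw [Finset.sum_const, nsmul_eq_mul]
    rw [Finset.sum_congr rfl this, ← Finset.mul_sum, ← Finset.mul_sum]
    have hGsum : ∑ t ∈ TLset L, G t = 3 * SS := by
      simp only [hG]
      rw [sym3 p q, hSS_eq]
    rw [hGsum]
  have key : W ≤ ((TNset n).card : ℝ) * (C2 * (3 * SS)) := by
    rw [← step3, ← step2]; exact step1
  have goal1 : W ≤ 3 * (Nat.choose n 3 : ℝ) * ((n : ℝ) - 2) * SS := by
    by_cases hn : 3 ≤ n
    · have hC2eq : C2 = (n : ℝ) - 2 := by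
        rw [hC2, Nat.cast_sub (by omega)]; norm_num
      have hcard : ((TNset n).card : ℝ) ≤ (Nat.choose n 3 : ℝ) :=
        Nat.cast_le.2 (card_TN n)
      calc W ≤ ((TNset n).card : ℝ) * (C2 * (3 * SS)) := key
        _ = 3 * ((TNset n).card : ℝ) * C2 * SS := by ring
        _ ≤ 3 * (Nat.choose n 3 : ℝ) * C2 * SS := by
            apply mul_le_mul_of_nonneg_right _ hSSnn
            apply mul_le_mul_of_nonneg_right _ hC2nn
            linarith
        _ = 3 * (Nat.choose n 3 : ℝ) * ((n : ℝ) - 2) * SS := by rw [hC2eq]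
    · have hTN : TNset n = ∅ := by
        refine Finset.eq_empty_of_forall_notMem ?_
        rintro ⟨a, b, c⟩ hs
        simp only [TNset, Finset.mem_filter, Finset.mem_univ, true_and] at hs
        have hc : (c : ℕ) < n := c.isLt
        have h1 : (a : ℕ) < (b : ℕ) := hs.1
        have h2 : (b : ℕ) < (c : ℕ) := hs.2
        omega
      have hch : Nat.choose n 3 = 0 := Nat.choose_eq_zero_of_lt (by omega)
      rw [hch]
      have : W ≤ 0 := by
        calc W ≤ ((TNset n).card : ℝ) * (C2 * (3 * SS)) := key
          _ = 0 := by rw [hTN]; simp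
      calc W ≤ 0 := this
        _ = 3 * ((0 : ℕ) : ℝ) * ((n : ℝ) - 2) * SS := by simp
  refine ⟨goal1, ?_⟩
  have goal2aux : 3 * (Nat.choose n 3 : ℝ) * ((n : ℝ) - 2) ≤ 1 / 2 * (n : ℝ) ^ 4 := by
    by_cases hn : 2 ≤ n
    · have hnat : 6 * Nat.choose n 3 * (n - 2) ≤ n ^ 4 := by
        have h1 : 6 * Nat.choose n 3 = Nat.descFactorial n 3 := by
          rw [Nat.descFactorial_eq_factorial_mul_choose]
          norm_num [Nat.factorial]
        have h2 : Nat.descFactorial n 3 ≤ n ^ 3 := Nat.descFactorial_le_pow n 3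
        calc 6 * Nat.choose n 3 * (n - 2) ≤ n ^ 3 * n := by
              apply Nat.mul_le_mul (h1 ▸ h2); omega
          _ = n ^ 4 := by ring
      have hcast : ((6 * Nat.choose n 3 * (n - 2) : ℕ) : ℝ) ≤ ((n ^ 4 : ℕ) : ℝ) :=
        Nat.cast_le.2 hnat
      push_cast [Nat.cast_sub hn] at hcast
      linarith
    · have hch : Nat.choose n 3 = 0 := Nat.choose_eq_zero_of_lt (by omega)
      rw [hch]
      have : (0 : ℝ) ≤ 1 / 2 * (n : ℝ) ^ 4 := by positivity
      simp only [Nat.cast_zero, mul_zero, zero_mul, mul_comm]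
      linarith
  calc W ≤ 3 * (Nat.choose n 3 : ℝ) * ((n : ℝ) - 2) * SS := goal1
    _ ≤ 1 / 2 * (n : ℝ) ^ 4 * SS :=
        mul_le_mul_of_nonneg_right goal2aux hSSnn
end

section
/- Let W be a random variable taking values in the nonnegative integers and λ > 0. Then W has Poisson(λ) distribution if and only if E[λ·f(W+1) − W·f(W)] = 0 for all bounded functions f : ℕ → ℝ. -/
open MeasureTheory Finset ProbabilityTheory

section SteinAux
open ProbabilityTheory Real


lemma poisson_singleton (r : NNReal) (k : ℕ) :
    poissonMeasure r {k} = ENNReal.ofReal (poissonPMFReal r k) := by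
  rw [poissonMeasure_singleton]
  rfl

lemma stein_id (r : NNReal) (k : ℕ) :
    ((k : ℝ) + 1) * poissonPMFReal r (k + 1) = r * poissonPMFReal r k := by
  unfold poissonPMFReal
  rw [Nat.factorial_succ]
  have h1 : (k.factorial : ℝ) ≠ 0 := Nat.cast_ne_zero.2 k.factorial_ne_zero
  push_cast
  field_simp
  ring

lemma summable_poisson (r : NNReal) : Summable (fun k : ℕ => poissonPMFReal r k) :=
  (poissonPMFRealSum r).summable

lemma summable_id_mul (r : NNReal) :
    Summable (fun k : ℕ => (k : ℝ) * poissonPMFReal r k) := by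
  rw [← summable_nat_add_iff 1]
  have : (fun k : ℕ => ((k + 1 : ℕ) : ℝ) * poissonPMFReal r (k + 1)) =
      fun k : ℕ => (r : ℝ) * poissonPMFReal r k := by
    funext k; push_cast; exact stein_id r k
  rw [this]
  exact (summable_poisson r).mul_left _

lemma integrable_id_poisson (r : NNReal) :
    Integrable (fun k : ℕ => (k : ℝ)) (poissonMeasure r) := by
  refine ⟨(measurable_from_nat).aestronglyMeasurable, ?_⟩
  rw [HasFiniteIntegral, lintegral_countable']
  have h : ∀ k : ℕ, ‖(k : ℝ)‖ₑ * poissonMeasure r {k}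
      = ENNReal.ofReal ((k : ℝ) * poissonPMFReal r k) := by
    intro k
    rw [poisson_singleton, ENNReal.ofReal_mul (Nat.cast_nonneg k)]
    congr 1
    simp [Real.enorm_eq_ofReal (Nat.cast_nonneg k)]
  simp_rw [h]
  rw [← ENNReal.ofReal_tsum_of_nonneg (fun k => mul_nonneg (Nat.cast_nonneg k) poissonPMFReal_nonneg) (summable_id_mul r)]
  exact ENNReal.ofReal_lt_top

lemma forward_dir (r : NNReal) (f : ℕ → ℝ) (C : ℝ) (hC : ∀ k, |f k| ≤ C) :
    ∫ k, ((r : ℝ) * f (k + 1) - (k : ℝ) * f k) ∂(poissonMeasure r) = 0 := by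
  set p : ℕ → ℝ := fun k => poissonPMFReal r k with hp
  have hpnn : ∀ k, 0 ≤ p k := fun k => poissonPMFReal_nonneg
  have hint1 : Integrable (fun k : ℕ => (r : ℝ) * f (k + 1)) (poissonMeasure r) := by
    refine Integrable.mono' (integrable_const ((r : ℝ) * C))
      measurable_from_nat.aestronglyMeasurable (Filter.Eventually.of_forall fun k => ?_)
    rw [Real.norm_eq_abs, abs_mul, NNReal.abs_eq r]
    exact mul_le_mul_of_nonneg_left (hC _) r.2
  have hint2 : Integrable (fun k : ℕ => (k : ℝ) * f k) (poissonMeasure r) := by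
    refine Integrable.mono' ((integrable_id_poisson r).mul_const C)
      measurable_from_nat.aestronglyMeasurable (Filter.Eventually.of_forall fun k => ?_)
    rw [Real.norm_eq_abs, abs_mul, abs_of_nonneg (Nat.cast_nonneg (α := ℝ) k)]
    exact mul_le_mul_of_nonneg_left (hC _) (Nat.cast_nonneg k)
  have hint : Integrable (fun k : ℕ => (r : ℝ) * f (k + 1) - (k : ℝ) * f k) (poissonMeasure r) :=
    hint1.sub hint2
  rw [integral_countable' hint]
  have htoReal : ∀ k : ℕ, (poissonMeasure r).real {k} = p k := fun k => by
    rw [measureReal_def, poisson_singleton, ENNReal.toReal_ofReal (hpnn k)]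
  simp_rw [smul_eq_mul, htoReal, mul_sub]
  have hA : Summable (fun k : ℕ => p k * ((r : ℝ) * f (k + 1))) := by
    refine Summable.of_norm_bounded ((summable_poisson r).mul_right ((r : ℝ) * C)) fun k => ?_
    rw [Real.norm_eq_abs, abs_mul, abs_of_nonneg (hpnn k), abs_mul, NNReal.abs_eq r]
    exact mul_le_mul_of_nonneg_left
      (mul_le_mul_of_nonneg_left (hC _) r.coe_nonneg) (hpnn k)
  have hB : Summable (fun k : ℕ => p k * ((k : ℝ) * f k)) := by
    refine Summable.of_norm_bounded (((summable_id_mul r)).mul_right C) fun k => ?_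
    rw [Real.norm_eq_abs, abs_mul, abs_of_nonneg (hpnn k), abs_mul,
      abs_of_nonneg (Nat.cast_nonneg (α := ℝ) k)]
    calc p k * ((k : ℝ) * |f k|) ≤ p k * ((k : ℝ) * C) := by
          exact mul_le_mul_of_nonneg_left
            (mul_le_mul_of_nonneg_left (hC _) (Nat.cast_nonneg k)) (hpnn k)
      _ = (k : ℝ) * p k * C := by ring
  rw [Summable.tsum_sub hA hB, sub_eq_zero]
  rw [Summable.tsum_eq_zero_add hB]
  have h0 : p 0 * ((0 : ℕ) * f 0) = 0 := by simp
  rw [h0, zero_add]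
  refine tsum_congr fun k => ?_
  have h := stein_id r k
  simp only [hp] at *
  push_cast
  linear_combination (-(f (k + 1))) * h

lemma backward_dir {Ω : Type*} [MeasurableSpace Ω] (μ : Measure Ω) [IsProbabilityMeasure μ]
    (W : Ω → ℕ) (hW : Measurable W) (r : NNReal)
    (h : ∀ f : ℕ → ℝ, (∃ C, ∀ k, |f k| ≤ C) →
      ∫ ω, ((r : ℝ) * f (W ω + 1) - (W ω : ℝ) * f (W ω)) ∂μ = 0) :
    μ.map W = poissonMeasure r := by
  set ν := μ.map W with hν
  have hprob : IsProbabilityMeasure ν := Measure.isProbabilityMeasure_map hW.aemeasurable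
  set ρ : ℕ → ℝ := fun k => (ν {k}).toReal with hρ
  have hmeas : ∀ m : ℕ, μ (W ⁻¹' {m}) = ν {m} := fun m =>
    (Measure.map_apply hW (measurableSet_singleton m)).symm
  have hrec : ∀ m : ℕ, (r : ℝ) * ρ m = ((m : ℝ) + 1) * ρ (m + 1) := by
    intro m
    have hb : ∃ C, ∀ k, |(fun k => if k = m + 1 then (1:ℝ) else 0) k| ≤ C :=
      ⟨1, fun k => by dsimp only; split <;> simp⟩
    have key := h (fun k => if k = m + 1 then (1:ℝ) else 0) hb
    have heq : (fun ω => (r : ℝ) * (if W ω + 1 = m + 1 then (1:ℝ) else 0) -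
        (W ω : ℝ) * (if W ω = m + 1 then (1:ℝ) else 0)) =
        fun ω => Set.indicator (W ⁻¹' {m}) (fun _ => (r : ℝ)) ω -
          Set.indicator (W ⁻¹' {m + 1}) (fun _ => ((m : ℝ) + 1)) ω := by
      classical
      funext ω
      by_cases h1 : W ω = m <;> by_cases h2 : W ω = m + 1 <;>
        simp [Set.indicator_apply, Set.mem_preimage, h1, h2]
    have key2 : ∫ ω, (Set.indicator (W ⁻¹' {m}) (fun _ => (r : ℝ)) ω -
        Set.indicator (W ⁻¹' {m + 1}) (fun _ => ((m : ℝ) + 1)) ω) ∂μ = 0 := by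
      rw [← heq]; exact key
    rename' key2 => key
    rw [integral_sub ((integrable_const _).indicator (hW (measurableSet_singleton m)))
        ((integrable_const _).indicator (hW (measurableSet_singleton (m+1)))),
      integral_indicator_const _ (hW (measurableSet_singleton m)),
      integral_indicator_const _ (hW (measurableSet_singleton (m+1))),
      measureReal_def, measureReal_def, hmeas, hmeas] at key
    simp only [smul_eq_mul] at key
    linear_combination key
  have hform : ∀ k : ℕ, ρ k = ρ 0 * ((r : ℝ) ^ k / k.factorial) := by
    intro k
    induction k with
    | zero => simp
    | succ k ih =>
      have hk1 : ((k : ℝ) + 1) ≠ 0 := by positivity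
      have hstep : ρ (k + 1) = (r : ℝ) * ρ k / ((k : ℝ) + 1) := by
        field_simp
        linear_combination -hrec k
      rw [hstep, ih, Nat.factorial_succ]
      have hfac : (k.factorial : ℝ) ≠ 0 := Nat.cast_ne_zero.2 k.factorial_ne_zero
      push_cast
      field_simp
      ring
  have hρp : ∀ k : ℕ, ρ k = (ρ 0 * Real.exp r) * poissonPMFReal r k := by
    intro k
    rw [hform k]
    unfold poissonPMFReal
    rw [Real.exp_neg]
    have hexp : Real.exp r * (Real.exp r)⁻¹ = 1 := mul_inv_cancel₀ (Real.exp_ne_zero r)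
    linear_combination (-(ρ 0 * ((r : ℝ) ^ k / (k.factorial : ℝ)))) * hexp
  have hsum : ∑' k : ℕ, ρ k = 1 := by
    have h1 : ν Set.univ = ∑' k : ℕ, ν {k} := by
      rw [← Set.iUnion_of_singleton ℕ]
      exact measure_iUnion (fun i j hij => Set.disjoint_singleton.2 hij)
        (fun k => measurableSet_singleton k)
    have h2 : (ν Set.univ).toReal = 1 := by simp
    rw [← h2, h1, ENNReal.tsum_toReal_eq (fun k => measure_ne_top ν {k})]
  have hc : ρ 0 * Real.exp r = 1 := by
    have h3 : ∑' k : ℕ, (ρ 0 * Real.exp r) * poissonPMFReal r k = 1 := by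
      rw [← hsum]; exact tsum_congr fun k => (hρp k).symm
    rwa [tsum_mul_left, HasSum.tsum_eq (f := fun k => poissonPMFReal r k) (poissonPMFRealSum r), mul_one] at h3
  have hfin : ∀ k, ρ k = poissonPMFReal r k := fun k => by rw [hρp k, hc, one_mul]
  refine Measure.ext_of_singleton fun k => ?_
  rw [poisson_singleton, ← ENNReal.ofReal_toReal (measure_ne_top ν {k}), ← hfin k]


end SteinAux

theorem poisson_stein_characterization {Ω : Type*} [MeasurableSpace Ω] (μ : Measure Ω)
    [IsProbabilityMeasure μ] (W : Ω → ℕ) (hW : Measurable W) (r : NNReal) (hr : 0 < r) :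
    μ.map W = ProbabilityTheory.poissonMeasure r ↔
      ∀ f : ℕ → ℝ, (∃ C, ∀ k, |f k| ≤ C) →
        ∫ ω, ((r : ℝ) * f (W ω + 1) - (W ω : ℝ) * f (W ω)) ∂μ = 0 := by
  constructor
  · intro hmap f hf
    obtain ⟨C, hC⟩ := hf
    have hg : Measurable (fun k : ℕ => (r : ℝ) * f (k + 1) - (k : ℝ) * f k) :=
      measurable_from_nat
    calc ∫ ω, ((r : ℝ) * f (W ω + 1) - (W ω : ℝ) * f (W ω)) ∂μ
        = ∫ k, ((r : ℝ) * f (k + 1) - (k : ℝ) * f k) ∂(μ.map W) :=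
          (integral_map hW.aemeasurable hg.aestronglyMeasurable).symm
      _ = 0 := by rw [hmap]; exact forward_dir r f C hC
  · exact fun h => backward_dir μ W hW r h
end
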